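/- Let R be a right po-coherent po-ring and let A be a partially ordered right R-module. Then the following are equivalent: (i) A is finitely po-presented; (ii) A is finitely related; (iii) A is a finitely presented right R-module and A⁺ = {a ∈ A | 0 ≤ a} is a finitely generated right R⁺-semimodule. -/

import Mathlib

/-- A *po-ring*: a ring equipped with a partial order such that addition is
translation-invariant, multiplication by nonnegative elements (on either side) is monotone,
the ring is directed (every element is a difference of two nonnegative elements),
and `0 ≤ 1`. -/
class PORing (R : Type*) extends Ring R, PartialOrder R where
  add_le_add_right' : ∀ a b : R, a ≤ b → ∀ c : R, a + c ≤ b + c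
  mul_le_mul_of_nonneg_right' : ∀ a b c : R, a ≤ b → 0 ≤ c → a * c ≤ b * c
  mul_le_mul_of_nonneg_left' : ∀ a b c : R, a ≤ b → 0 ≤ c → c * a ≤ c * b
  directed' : ∀ x : R, ∃ y z : R, 0 ≤ y ∧ 0 ≤ z ∧ x = y - z
  zero_le_one' : (0 : R) ≤ 1

/-- A *partially ordered right module* over a po-ring `R`: an additive abelian group with a
right `R`-action `rsmul` (written on the right, so `rsmul a ξ` is `aξ`), with the usual
right-module axioms, such that addition is translation-invariant and
`0 ≤ a`, `0 ≤ ξ` imply `0 ≤ aξ`. -/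
class PORightModule (R : Type*) [PORing R] (A : Type*) [AddCommGroup A] [PartialOrder A] where
  rsmul : A → R → A
  add_rsmul : ∀ (a b : A) (r : R), rsmul (a + b) r = rsmul a r + rsmul b r
  rsmul_add : ∀ (a : A) (r s : R), rsmul a (r + s) = rsmul a r + rsmul a s
  rsmul_mul : ∀ (a : A) (r s : R), rsmul a (r * s) = rsmul (rsmul a r) s
  rsmul_one : ∀ a : A, rsmul a 1 = a
  add_le_add_right' : ∀ a b : A, a ≤ b → ∀ c : A, a + c ≤ b + c
  rsmul_nonneg : ∀ (a : A) (r : R), 0 ≤ a → 0 ≤ r → 0 ≤ rsmul a r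

open PORightModule

/-- A po-ring is a partially ordered right module over itself. -/
instance PORing.toPORightModule (R : Type*) [PORing R] : PORightModule R R where
  rsmul := (· * ·)
  add_rsmul := add_mul
  rsmul_add := mul_add
  rsmul_mul a r s := (mul_assoc a r s).symm
  rsmul_one := mul_one
  add_le_add_right' := PORing.add_le_add_right'
  rsmul_nonneg a r ha hr := by
    have h := PORing.mul_le_mul_of_nonneg_right' 0 a r ha hr
    simpa using h

/-- Products of partially ordered right modules, ordered coordinatewise. -/
instance Pi.instPORightModule {R : Type*} [PORing R] {ι : Type*} {A : ι → Type*}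
    [∀ i, AddCommGroup (A i)] [∀ i, PartialOrder (A i)] [∀ i, PORightModule R (A i)] :
    PORightModule R (∀ i, A i) where
  rsmul x r i := rsmul (x i) r
  add_rsmul a b r := funext fun i => add_rsmul (a i) (b i) r
  rsmul_add a r s := funext fun i => rsmul_add (a i) r s
  rsmul_mul a r s := funext fun i => rsmul_mul (a i) r s
  rsmul_one a := funext fun i => rsmul_one (a i)
  add_le_add_right' a b h c := by
    intro i
    exact PORightModule.add_le_add_right' R (a i) (b i) (h i) (c i)
  rsmul_nonneg a r ha hr := by
    intro i
    exact PORightModule.rsmul_nonneg (a i) r (ha i) hr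

/-- Binary products of partially ordered right modules, ordered coordinatewise. -/
instance Prod.instPORightModule {R : Type*} [PORing R] {A B : Type*}
    [AddCommGroup A] [PartialOrder A] [PORightModule R A]
    [AddCommGroup B] [PartialOrder B] [PORightModule R B] :
    PORightModule R (A × B) where
  rsmul x r := (rsmul x.1 r, rsmul x.2 r)
  add_rsmul a b r := by
    refine Prod.ext ?_ ?_ <;> simp [PORightModule.add_rsmul]
  rsmul_add a r s := by
    refine Prod.ext ?_ ?_ <;> simp [PORightModule.rsmul_add]
  rsmul_mul a r s := by
    refine Prod.ext ?_ ?_ <;> simp [PORightModule.rsmul_mul]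
  rsmul_one a := by
    refine Prod.ext ?_ ?_ <;> simp [PORightModule.rsmul_one]
  add_le_add_right' a b h c := by
    rw [Prod.le_def] at h ⊢
    constructor
    · simpa using PORightModule.add_le_add_right' R a.1 b.1 h.1 c.1
    · simpa using PORightModule.add_le_add_right' R a.2 b.2 h.2 c.2
  rsmul_nonneg a r ha hr := by
    rw [Prod.le_def] at ha ⊢
    constructor
    · simpa using PORightModule.rsmul_nonneg a.1 r (by simpa using ha.1) hr
    · simpa using PORightModule.rsmul_nonneg a.2 r (by simpa using ha.2) hr

section Defs

variable (R : Type*) [PORing R]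

/-- The product `UX = a₁ξ₁ + ⋯ + aₙξₙ` of a row matrix `U = (a₁,…,aₙ)` with entries in `A`
and a column matrix `X = (ξ₁,…,ξₙ)ᵗ` with entries in `R`. -/
def rowMul {A : Type*} [AddCommGroup A] [PartialOrder A] [PORightModule R A]
    {n : ℕ} (U : Fin n → A) (X : Fin n → R) : A :=
  ∑ i, rsmul (U i) (X i)

/-- A subset `S` of a partially ordered right `R`-module is a *finitely generated
`R⁺`-subsemimodule* if it is the set of all `R⁺`-linear combinations of some finite subset. -/
def IsFGConeIn {A : Type*} [AddCommGroup A] [PartialOrder A] [PORightModule R A]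
    (S : Set A) : Prop :=
  ∃ (k : ℕ) (g : Fin k → A),
    S = { a | ∃ Y : Fin k → R, (∀ i, 0 ≤ Y i) ∧ a = rowMul R g Y }

/-- `A` is *finitely related at* the row matrix `U ∈ M_{1,n}(A)` if the solution set of the
mixed system `UX ≥ 0, X ≥ 0` is a finitely generated `R⁺`-subsemimodule of `M_{n,1}(R)`. -/
def FinitelyRelatedAt {A : Type*} [AddCommGroup A] [PartialOrder A] [PORightModule R A]
    {n : ℕ} (U : Fin n → A) : Prop :=
  IsFGConeIn R {X : Fin n → R | 0 ≤ rowMul R U X ∧ ∀ i, 0 ≤ X i}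

/-- `A` is *finitely po-presented at* the row matrix `U ∈ M_{1,n}(A)` if the solution set of
the system `UX ≥ 0` is a finitely generated `R⁺`-subsemimodule of `M_{n,1}(R)`. -/
def FinitelyPoPresentedAt {A : Type*} [AddCommGroup A] [PartialOrder A] [PORightModule R A]
    {n : ℕ} (U : Fin n → A) : Prop :=
  IsFGConeIn R {X : Fin n → R | 0 ≤ rowMul R U X}

/-- A row matrix `U` is *spanning* if its entries generate `A` as a right `R`-module, i.e.
every element of `A` is an `R`-linear combination `UX` of the entries. -/
def SpanningRow {A : Type*} [AddCommGroup A] [PartialOrder A] [PORightModule R A]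
    {n : ℕ} (U : Fin n → A) : Prop :=
  ∀ a : A, ∃ X : Fin n → R, a = rowMul R U X

variable (A : Type*) [AddCommGroup A] [PartialOrder A] [PORightModule R A]

/-- `A` is *finitely po-presented* if it is finitely po-presented at some spanning row
matrix. -/
def FinitelyPoPresented : Prop :=
  ∃ (n : ℕ) (U : Fin n → A), SpanningRow R U ∧ FinitelyPoPresentedAt R U

/-- `A` is *finitely related* if it is a finitely generated right `R`-module and is finitely
related at every spanning row matrix. -/
def FinitelyRelatedMod : Prop :=
  (∃ (n : ℕ) (U : Fin n → A), SpanningRow R U) ∧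
    ∀ (n : ℕ) (U : Fin n → A), SpanningRow R U → FinitelyRelatedAt R U

/-- `A` is *po-coherent* if it is finitely related at every row matrix of elements of `A`. -/
def PoCoherent : Prop :=
  ∀ (n : ℕ) (U : Fin n → A), FinitelyRelatedAt R U

end Defs

/-- A po-ring is *right po-coherent* if it is po-coherent as a partially ordered right module
over itself. -/
def RightPoCoherent (R : Type*) [PORing R] : Prop :=
  PoCoherent R R

/-- `A` is a *finitely presented* right `R`-module: it has a finite spanning row whose module
of relations (the solution set of `UX = 0`) is a finitely generated right `R`-submodule of
`M_{n,1}(R)`. -/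
def FinitelyPresentedModule (R A : Type*) [PORing R] [AddCommGroup A] [PartialOrder A]
    [PORightModule R A] : Prop :=
  ∃ (n : ℕ) (U : Fin n → A), SpanningRow R U ∧
    ∃ (k : ℕ) (g : Fin k → (Fin n → R)),
      {X : Fin n → R | rowMul R U X = 0} = {X | ∃ Y : Fin k → R, X = rowMul R g Y}

section Basic

open Finset

variable (R : Type*) [PORing R] {A : Type*} [AddCommGroup A] [PartialOrder A]
  [PORightModule R A]

include R

lemma po_add_le_add_right {a b : A} (h : a ≤ b) (c : A) : a + c ≤ b + c :=
  PORightModule.add_le_add_right' R a b h c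

lemma po_add_nonneg {a b : A} (ha : 0 ≤ a) (hb : 0 ≤ b) : 0 ≤ a + b := by
  calc (0:A) ≤ a := ha
    _ = 0 + a := by rw [zero_add]
    _ ≤ b + a := po_add_le_add_right R hb a
    _ = a + b := add_comm _ _

lemma po_eq_zero {a : A} (h1 : 0 ≤ a) (h2 : 0 ≤ -a) : a = 0 := by
  have h3 : 0 + a ≤ -a + a := po_add_le_add_right R h2 a
  simp only [zero_add, neg_add_cancel] at h3
  exact le_antisymm h3 h1

lemma po_sum_nonneg {ι : Type*} {s : Finset ι} {f : ι → A} (h : ∀ i ∈ s, 0 ≤ f i) :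
    0 ≤ ∑ i ∈ s, f i := by
  classical
  induction s using Finset.induction with
  | empty => simp
  | @insert a s ha ih =>
    rw [Finset.sum_insert ha]
    exact po_add_nonneg R (h a (Finset.mem_insert_self a s))
      (ih fun i hi => h i (Finset.mem_insert_of_mem hi))

end Basic

section Basic2

variable {R : Type*} [PORing R] {A : Type*} [AddCommGroup A] [PartialOrder A]
  [PORightModule R A]

@[simp] lemma rsmul_R_def (a r : R) : rsmul a r = a * r := rfl

@[simp] lemma rsmul_pi_apply {ι : Type*} {B : ι → Type*} [∀ i, AddCommGroup (B i)]
    [∀ i, PartialOrder (B i)] [∀ i, PORightModule R (B i)]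
    (x : ∀ i, B i) (r : R) (i : ι) : rsmul (R := R) x r i = rsmul (x i) r := rfl

lemma rsmul_zero_left (r : R) : rsmul (0 : A) r = 0 := by
  have h := add_rsmul (0 : A) 0 r
  rw [add_zero] at h
  exact add_left_cancel (h.symm.trans (add_zero _).symm)

lemma rsmul_zero_right (a : A) : rsmul a (0 : R) = 0 := by
  have h := rsmul_add a (0 : R) 0
  rw [add_zero] at h
  exact add_left_cancel (h.symm.trans (add_zero _).symm)

lemma rsmul_neg_left (a : A) (r : R) : rsmul (-a) r = -rsmul a r := by
  have h := add_rsmul a (-a) r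
  rw [add_neg_cancel, rsmul_zero_left] at h
  exact (neg_eq_of_add_eq_zero_right h.symm).symm

lemma rsmul_neg_right (a : A) (r : R) : rsmul a (-r) = -rsmul a r := by
  have h := rsmul_add a r (-r)
  rw [add_neg_cancel, rsmul_zero_right] at h
  exact (neg_eq_of_add_eq_zero_right h.symm).symm

lemma rsmul_sub_right (a : A) (r s : R) : rsmul a (r - s) = rsmul a r - rsmul a s := by
  rw [sub_eq_add_neg, rsmul_add, rsmul_neg_right, sub_eq_add_neg]

lemma rsmul_sum_left {ι : Type*} (s : Finset ι) (f : ι → A) (r : R) :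
    rsmul (∑ i ∈ s, f i) r = ∑ i ∈ s, rsmul (f i) r := by
  classical
  induction s using Finset.induction with
  | empty => simp [rsmul_zero_left]
  | @insert a s ha ih => rw [Finset.sum_insert ha, Finset.sum_insert ha, add_rsmul, ih]

end Basic2
section Row

variable {R : Type*} [PORing R] {A : Type*} [AddCommGroup A] [PartialOrder A]
  [PORightModule R A]

lemma rowMul_add_col {n : ℕ} (U : Fin n → A) (X Y : Fin n → R) :
    rowMul R U (X + Y) = rowMul R U X + rowMul R U Y := by
  unfold rowMul
  rw [← Finset.sum_add_distrib]
  exact Finset.sum_congr rfl fun i _ => by simp [rsmul_add]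

lemma rowMul_mul_col {n : ℕ} (U : Fin n → A) (X : Fin n → R) (r : R) :
    rowMul R U (fun i => X i * r) = rsmul (rowMul R U X) r := by
  unfold rowMul
  rw [rsmul_sum_left]
  exact Finset.sum_congr rfl fun i _ => rsmul_mul (U i) (X i) r

lemma rowMul_neg_col {n : ℕ} (U : Fin n → A) (X : Fin n → R) :
    rowMul R U (-X) = -rowMul R U X := by
  unfold rowMul
  rw [← Finset.sum_neg_distrib]
  exact Finset.sum_congr rfl fun i _ => by simp [rsmul_neg_right]

lemma rowMul_sub_col {n : ℕ} (U : Fin n → A) (X Y : Fin n → R) :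
    rowMul R U (X - Y) = rowMul R U X - rowMul R U Y := by
  rw [sub_eq_add_neg, rowMul_add_col, rowMul_neg_col, sub_eq_add_neg]

lemma rowMul_zero_col {n : ℕ} (U : Fin n → A) :
    rowMul R U (0 : Fin n → R) = 0 := by
  unfold rowMul
  exact Finset.sum_eq_zero fun i _ => rsmul_zero_right (U i)

lemma rowMul_neg_row {n : ℕ} (U : Fin n → A) (X : Fin n → R) :
    rowMul R (fun i => -(U i)) X = -rowMul R U X := by
  unfold rowMul
  rw [← Finset.sum_neg_distrib]
  exact Finset.sum_congr rfl fun i _ => rsmul_neg_left (U i) (X i)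

lemma rowMul_zero_row {n : ℕ} (X : Fin n → R) :
    rowMul R (fun _ => (0 : A)) X = 0 := by
  unfold rowMul
  exact Finset.sum_eq_zero fun i _ => rsmul_zero_left (X i)

lemma rowMul_nonneg {n : ℕ} {U : Fin n → A} {X : Fin n → R}
    (hU : ∀ i, 0 ≤ U i) (hX : ∀ i, 0 ≤ X i) : 0 ≤ rowMul R U X :=
  po_sum_nonneg R fun i _ => rsmul_nonneg (U i) (X i) (hU i) (hX i)

/-- A map that is additive and commutes with right scalar multiplication sends
`rowMul g Y` (in `Fin n → R`) to `rowMul (φ ∘ g) Y`. -/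
lemma phi_rowMul {n k : ℕ} (φ : (Fin n → R) → A)
    (hadd : ∀ x y, φ (x + y) = φ x + φ y)
    (hsm : ∀ (x : Fin n → R) (r : R), φ (fun i => x i * r) = rsmul (φ x) r)
    (g : Fin k → (Fin n → R)) (Y : Fin k → R) :
    φ (rowMul R g Y) = rowMul R (fun j => φ (g j)) Y := by
  classical
  have hmap : ∀ (s : Finset (Fin k)) (f : Fin k → (Fin n → R)),
      φ (∑ j ∈ s, f j) = ∑ j ∈ s, φ (f j) := by
    intro s f
    induction s using Finset.induction with
    | empty =>
      simp only [Finset.sum_empty]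
      have h := hadd 0 0
      rw [add_zero] at h
      exact add_left_cancel (h.symm.trans (add_zero _).symm)
    | @insert a s ha ih => rw [Finset.sum_insert ha, Finset.sum_insert ha, hadd, ih]
  unfold rowMul
  rw [hmap]
  exact Finset.sum_congr rfl fun j _ => by
    have : rsmul (R := R) (g j) (Y j) = fun i => g j i * Y j := rfl
    rw [this, hsm]

lemma rowMul_rowMul {n k : ℕ} (U : Fin n → A) (g : Fin k → (Fin n → R)) (Y : Fin k → R) :
    rowMul R U (rowMul R g Y) = rowMul R (fun j => rowMul R U (g j)) Y :=
  phi_rowMul (rowMul R U) (rowMul_add_col U) (rowMul_mul_col U) g Y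

/-- each generator lies in the cone it generates -/
lemma rowMul_delta {n : ℕ} (U : Fin n → A) (j : Fin n) :
    rowMul R U (fun l => if l = j then (1:R) else 0) = U j := by
  classical
  unfold rowMul
  rw [Finset.sum_eq_single j]
  · simp [rsmul_one]
  · intro b _ hb
    simp [hb, rsmul_zero_right]
  · simp

lemma delta_nonneg {n : ℕ} (j l : Fin n) : (0:R) ≤ if l = j then (1:R) else 0 := by
  split
  · exact PORing.zero_le_one'
  · exact le_refl 0

lemma gen_mem_cone {k : ℕ} {g : Fin k → A} {S : Set A}
    (hS : S = { a | ∃ Y : Fin k → R, (∀ i, 0 ≤ Y i) ∧ a = rowMul R g Y }) (j : Fin k) :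
    g j ∈ S := by
  rw [hS]
  exact ⟨fun l => if l = j then 1 else 0, delta_nonneg j, (rowMul_delta (R := R) g j).symm⟩

end Row
section Cone

variable {R : Type*} [PORing R]

/-- The positive orthant is a finitely generated cone (uses right po-coherence via
the zero row). -/
lemma base_cone (hR : RightPoCoherent R) (N : ℕ) :
    IsFGConeIn R {X : Fin N → R | ∀ i, 0 ≤ X i} := by
  have h := hR N (fun _ => (0:R))
  unfold FinitelyRelatedAt at h
  have he : {X : Fin N → R | 0 ≤ rowMul R (fun _ => (0:R)) X ∧ ∀ i, 0 ≤ X i}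
      = {X : Fin N → R | ∀ i, 0 ≤ X i} := by
    ext X
    simp [rowMul_zero_row]
  rwa [he] at h

/-- Adding one scalar inequality constraint to a f.g. cone keeps it f.g. -/
lemma refineR (hR : RightPoCoherent R) {N : ℕ} {S : Set (Fin N → R)}
    (hS : IsFGConeIn R S) (c : (Fin N → R) → R)
    (hadd : ∀ x y, c (x + y) = c x + c y)
    (hsm : ∀ (x : Fin N → R) (r : R), c (fun i => x i * r) = c x * r) :
    IsFGConeIn R {X ∈ S | 0 ≤ c X} := by
  obtain ⟨q, h, hh⟩ := hS
  obtain ⟨q', e, he⟩ := hR q (fun j => c (h j))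
  refine ⟨q', fun l => rowMul R h (e l), ?_⟩
  ext X
  constructor
  · rintro ⟨hXS, hcX⟩
    rw [hh] at hXS
    obtain ⟨Y, hY, rfl⟩ := hXS
    have hcY : c (rowMul R h Y) = rowMul R (fun j => c (h j)) Y :=
      phi_rowMul c hadd hsm h Y
    have hYT : Y ∈ {Y : Fin q → R | 0 ≤ rowMul R (fun j => c (h j)) Y ∧ ∀ i, 0 ≤ Y i} :=
      ⟨by rw [← hcY]; exact hcX, hY⟩
    rw [he] at hYT
    obtain ⟨Z, hZ, rfl⟩ := hYT
    exact ⟨Z, hZ, rowMul_rowMul h e Z⟩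
  · rintro ⟨Z, hZ, rfl⟩
    rw [← rowMul_rowMul h e Z]
    have hYT : rowMul R e Z ∈ {Y : Fin q → R | 0 ≤ rowMul R (fun j => c (h j)) Y ∧ ∀ i, 0 ≤ Y i} := by
      rw [he]; exact ⟨Z, hZ, rfl⟩
    obtain ⟨h1, h2⟩ := hYT
    constructor
    · rw [hh]; exact ⟨rowMul R e Z, h2, rfl⟩
    · rw [phi_rowMul c hadd hsm h (rowMul R e Z)]
      exact h1

/-- Adding one scalar equality constraint. -/
lemma refineEq (hR : RightPoCoherent R) {N : ℕ} {S : Set (Fin N → R)}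
    (hS : IsFGConeIn R S) (c : (Fin N → R) → R)
    (hadd : ∀ x y, c (x + y) = c x + c y)
    (hsm : ∀ (x : Fin N → R) (r : R), c (fun i => x i * r) = c x * r) :
    IsFGConeIn R {X ∈ S | c X = 0} := by
  have h1 := refineR hR hS c hadd hsm
  have h2 := refineR hR h1 (fun X => -(c X))
    (fun x y => by rw [hadd, neg_add]) (fun x r => by rw [hsm, neg_mul])
  have he : {X ∈ {X ∈ S | 0 ≤ c X} | 0 ≤ -(c X)} = {X ∈ S | c X = 0} := by
    ext X
    constructor
    · rintro ⟨⟨hXS, h1'⟩, h2'⟩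
      exact ⟨hXS, po_eq_zero R h1' h2'⟩
    · rintro ⟨hXS, h0⟩
      exact ⟨⟨hXS, by rw [h0]⟩, by rw [h0, neg_zero]⟩
  rwa [he] at h2

/-- Adding finitely many scalar equality constraints. -/
lemma iterEq (hR : RightPoCoherent R) {N n : ℕ} {S : Set (Fin N → R)}
    (hS : IsFGConeIn R S) (c : Fin n → ((Fin N → R) → R))
    (hadd : ∀ i x y, c i (x + y) = c i x + c i y)
    (hsm : ∀ i (x : Fin N → R) (r : R), c i (fun l => x l * r) = c i x * r) :
    IsFGConeIn R {X ∈ S | ∀ i, c i X = 0} := by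
  classical
  have key : ∀ s : Finset (Fin n), IsFGConeIn R {X ∈ S | ∀ i ∈ s, c i X = 0} := by
    intro s
    induction s using Finset.induction with
    | empty => simpa using hS
    | @insert a s ha ih =>
      have h2 := refineEq hR ih (c a) (hadd a) (hsm a)
      have he : {X ∈ {X ∈ S | ∀ i ∈ s, c i X = 0} | c a X = 0}
          = {X ∈ S | ∀ i ∈ insert a s, c i X = 0} := by
        ext X
        constructor
        · rintro ⟨⟨hXS, hall⟩, hA⟩
          refine ⟨hXS, fun i hi => ?_⟩
          rcases Finset.mem_insert.mp hi with rfl | hi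
          · exact hA
          · exact hall i hi
        · rintro ⟨hXS, hall⟩
          exact ⟨⟨hXS, fun i hi => hall i (Finset.mem_insert_of_mem hi)⟩,
            hall a (Finset.mem_insert_self a s)⟩
      rwa [he] at h2
  have := key Finset.univ
  have he : {X ∈ S | ∀ i ∈ Finset.univ, c i X = 0} = {X ∈ S | ∀ i, c i X = 0} := by
    ext X; simp
  rwa [he] at this

/-- The image of a f.g. cone under an additive, rsmul-commuting map is f.g. -/
lemma image_cone {A : Type*} [AddCommGroup A] [PartialOrder A] [PORightModule R A]
    {N : ℕ} {S : Set (Fin N → R)} (hS : IsFGConeIn R S)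
    (φ : (Fin N → R) → A)
    (hadd : ∀ x y, φ (x + y) = φ x + φ y)
    (hsm : ∀ (x : Fin N → R) (r : R), φ (fun i => x i * r) = rsmul (φ x) r) :
    IsFGConeIn R (φ '' S) := by
  obtain ⟨q, g, hg⟩ := hS
  refine ⟨q, fun j => φ (g j), ?_⟩
  ext b
  constructor
  · rintro ⟨X, hXS, rfl⟩
    rw [hg] at hXS
    obtain ⟨Y, hY, rfl⟩ := hXS
    exact ⟨Y, hY, phi_rowMul φ hadd hsm g Y⟩
  · rintro ⟨Y, hY, rfl⟩
    exact ⟨rowMul R g Y, by rw [hg]; exact ⟨Y, hY, rfl⟩, phi_rowMul φ hadd hsm g Y⟩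

end Cone
section RefineK

variable {R : Type*} [PORing R]

lemma refineK (hR : RightPoCoherent R) {N n : ℕ} {S : Set (Fin N → R)}
    (hS : IsFGConeIn R S) {K : Set (Fin n → R)} (hK : IsFGConeIn R K)
    (d : (Fin N → R) → (Fin n → R))
    (hadd : ∀ x y, d (x + y) = d x + d y)
    (hsm : ∀ (x : Fin N → R) (r : R), d (fun i => x i * r) = fun i => d x i * r) :
    IsFGConeIn R {X ∈ S | d X ∈ K} := by
  classical
  obtain ⟨q, h, hh⟩ := hS
  obtain ⟨k, g, hg⟩ := hK
  set Yof : (Fin (q + k) → R) → (Fin q → R) := fun W j => W (Fin.castAdd k j) with hYof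
  set Tof : (Fin (q + k) → R) → (Fin k → R) := fun W j => W (Fin.natAdd q j) with hTof
  set ψ : (Fin (q + k) → R) → (Fin N → R) := fun W => rowMul R h (Yof W) with hψ
  have hψadd : ∀ x y, ψ (x + y) = ψ x + ψ y := by
    intro x y
    have : Yof (x + y) = Yof x + Yof y := rfl
    rw [hψ]; simp only []; rw [this, rowMul_add_col]
  have hψsm : ∀ (x : Fin (q+k) → R) (r : R), ψ (fun l => x l * r) = rsmul (ψ x) r := by
    intro x r
    have : Yof (fun l => x l * r) = fun j => Yof x j * r := rfl
    rw [hψ]; simp only []; rw [this, rowMul_mul_col]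
  have hψsm' : ∀ (x : Fin (q+k) → R) (r : R), ψ (fun l => x l * r) = fun i => ψ x i * r :=
    hψsm
  have hTadd : ∀ x y, rowMul R g (Tof (x+y)) = rowMul R g (Tof x) + rowMul R g (Tof y) := by
    intro x y
    have : Tof (x + y) = Tof x + Tof y := rfl
    rw [this, rowMul_add_col]
  set c : Fin n → ((Fin (q + k) → R) → R) :=
    fun i W => d (ψ W) i - rowMul R g (Tof W) i with hc
  have hcadd : ∀ i x y, c i (x + y) = c i x + c i y := by
    intro i x y
    simp only [hc]
    rw [hψadd, hadd, hTadd]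
    have hp : (d (ψ x) + d (ψ y)) i = d (ψ x) i + d (ψ y) i := rfl
    have hp2 : (rowMul R g (Tof x) + rowMul R g (Tof y)) i
        = rowMul R g (Tof x) i + rowMul R g (Tof y) i := rfl
    rw [hp, hp2]
    abel
  have hcsm : ∀ i (x : Fin (q+k) → R) (r : R), c i (fun l => x l * r) = c i x * r := by
    intro i x r
    simp only [hc]
    have h1 : d (ψ fun l => x l * r) = fun j => d (ψ x) j * r := by
      rw [hψsm' x r, hsm]
    have h2 : Tof (fun l => x l * r) = fun j => Tof x j * r := rfl
    have h3 : rowMul R g (fun j => Tof x j * r) = rsmul (rowMul R g (Tof x)) r :=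
      rowMul_mul_col g (Tof x) r
    rw [h1, h2, h3]
    have h4 : rsmul (R := R) (rowMul R g (Tof x)) r i = rowMul R g (Tof x) i * r := rfl
    rw [h4, sub_mul]
  have hS1 := iterEq hR (base_cone hR (q + k)) c hcadd hcsm
  have himg := image_cone hS1 ψ hψadd hψsm
  have hset : ψ '' {W ∈ {X : Fin (q+k) → R | ∀ i, 0 ≤ X i} | ∀ i, c i W = 0}
      = {X ∈ S | d X ∈ K} := by
    ext X
    constructor
    · rintro ⟨W, ⟨hWpos, hWc⟩, rfl⟩
      have hY : ∀ j, 0 ≤ Yof W j := fun j => hWpos _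
      have hT : ∀ j, 0 ≤ Tof W j := fun j => hWpos _
      refine ⟨by rw [hh]; exact ⟨Yof W, hY, rfl⟩, ?_⟩
      have hdeq : d (ψ W) = rowMul R g (Tof W) := by
        funext i
        have h5 := hWc i
        simp only [hc] at h5
        exact sub_eq_zero.mp h5
      rw [hdeq, hg]
      exact ⟨Tof W, hT, rfl⟩
    · rintro ⟨hXS, hdK⟩
      rw [hh] at hXS
      obtain ⟨Y, hY, rfl⟩ := hXS
      rw [hg] at hdK
      obtain ⟨T, hT, hdeq⟩ := hdK
      refine ⟨Fin.append Y T, ⟨?_, ?_⟩, ?_⟩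
      · intro l
        refine Fin.addCases (fun j => ?_) (fun j => ?_) l
        · rw [Fin.append_left]; exact hY j
        · rw [Fin.append_right]; exact hT j
      · intro i
        have hYW : Yof (Fin.append Y T) = Y := funext fun j => Fin.append_left Y T j
        have hTW : Tof (Fin.append Y T) = T := funext fun j => Fin.append_right Y T j
        simp only [hc, hψ, hYW, hTW]
        rw [← hdeq]
        simp
      · have hYW : Yof (Fin.append Y T) = Y := funext fun j => Fin.append_left Y T j
        simp only [hψ, hYW]
  rwa [hset] at himg

end RefineK
section Steps

variable {R : Type*} [PORing R] {A : Type*} [AddCommGroup A] [PartialOrder A]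
  [PORightModule R A]

lemma rowMul_append {n m : ℕ} (U : Fin n → A) (V : Fin m → A) (X : Fin (n + m) → R) :
    rowMul R (Fin.append U V) X
      = rowMul R U (fun i => X (Fin.castAdd m i)) + rowMul R V (fun i => X (Fin.natAdd n i)) := by
  unfold rowMul
  rw [Fin.sum_univ_add]
  congr 1
  · exact Finset.sum_congr rfl fun i _ => by rw [Fin.append_left]
  · exact Finset.sum_congr rfl fun i _ => by rw [Fin.append_right]

lemma append_nonneg {n m : ℕ} {P : Fin n → R} {Q : Fin m → R}
    (hP : ∀ i, 0 ≤ P i) (hQ : ∀ i, 0 ≤ Q i) : ∀ l, 0 ≤ Fin.append P Q l := by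
  intro l
  refine Fin.addCases (fun j => ?_) (fun j => ?_) l
  · rw [Fin.append_left]; exact hP j
  · rw [Fin.append_right]; exact hQ j

/-- (ii) ⇒ (i) -/
lemma step_ii_i (h2 : FinitelyRelatedMod R A) : FinitelyPoPresented R A := by
  classical
  obtain ⟨⟨n, U, hspan⟩, hrel⟩ := h2
  set W : Fin (n + n) → A := Fin.append U (fun i => -(U i)) with hW
  have hkey : ∀ Z : Fin (n + n) → R,
      rowMul R W Z = rowMul R U (fun i => Z (Fin.castAdd n i) - Z (Fin.natAdd n i)) := by
    intro Z
    rw [hW, rowMul_append, rowMul_neg_row]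
    have h6 : (fun i => Z (Fin.castAdd n i) - Z (Fin.natAdd n i))
        = (fun i => Z (Fin.castAdd n i)) - (fun i => Z (Fin.natAdd n i)) := rfl
    rw [h6, rowMul_sub_col, sub_eq_add_neg]
  have hWspan : SpanningRow R W := by
    intro a
    obtain ⟨X, hX⟩ := hspan a
    refine ⟨Fin.append X 0, ?_⟩
    rw [hkey]
    have : (fun i => Fin.append X (0 : Fin n → R) (Fin.castAdd n i)
        - Fin.append X (0 : Fin n → R) (Fin.natAdd n i)) = X := by
      funext i
      rw [Fin.append_left, Fin.append_right]
      simp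
    rw [this]
    exact hX
  have hFR := hrel (n + n) W hWspan
  unfold FinitelyRelatedAt at hFR
  set φ : (Fin (n + n) → R) → (Fin n → R) :=
    fun Z i => Z (Fin.castAdd n i) - Z (Fin.natAdd n i) with hφ
  have hadd : ∀ x y, φ (x + y) = φ x + φ y := by
    intro x y; funext i; simp only [hφ]
    show (x + y) _ - (x + y) _ = (x _ - x _) + (y _ - y _)
    simp [Pi.add_apply]; abel
  have hsm : ∀ (x : Fin (n+n) → R) (r : R), φ (fun l => x l * r) = rsmul (φ x) r := by
    intro x r; funext i
    show x _ * r - x _ * r = (x _ - x _) * r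
    rw [sub_mul]
  have himg := image_cone hFR φ hadd hsm
  have hset : φ '' {Z : Fin (n+n) → R | 0 ≤ rowMul R W Z ∧ ∀ i, 0 ≤ Z i}
      = {X : Fin n → R | 0 ≤ rowMul R U X} := by
    ext X
    constructor
    · rintro ⟨Z, ⟨hZ1, _⟩, rfl⟩
      rw [hkey] at hZ1
      exact hZ1
    · intro hX
      choose P Q hP hQ hPQ using fun i => PORing.directed' (X i)
      refine ⟨Fin.append P Q, ⟨?_, append_nonneg hP hQ⟩, ?_⟩
      · rw [hkey]
        have : (fun i => Fin.append P Q (Fin.castAdd n i) - Fin.append P Q (Fin.natAdd n i)) = X := by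
          funext i
          rw [Fin.append_left, Fin.append_right, ← hPQ i]
        rw [this]
        exact hX
      · funext i
        simp only [hφ]
        rw [Fin.append_left, Fin.append_right, ← hPQ i]
  rw [hset] at himg
  exact ⟨n, U, hspan, himg⟩

end Steps
section Step1

variable {R : Type*} [PORing R] {A : Type*} [AddCommGroup A] [PartialOrder A]
  [PORightModule R A]

/-- (i) ⇒ (iii) -/
lemma step_i_iii (hR : RightPoCoherent R) (h1 : FinitelyPoPresented R A) :
    FinitelyPresentedModule R A ∧ IsFGConeIn R {a : A | 0 ≤ a} := by
  classical
  obtain ⟨n, U, hspan, hK⟩ := h1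
  unfold FinitelyPoPresentedAt at hK
  set K : Set (Fin n → R) := {X : Fin n → R | 0 ≤ rowMul R U X} with hKdef
  -- A⁺ is a f.g. cone
  have hplus : (rowMul R U) '' K = {a : A | 0 ≤ a} := by
    ext a
    constructor
    · rintro ⟨X, hX, rfl⟩
      exact hX
    · intro ha
      obtain ⟨X, hXa⟩ := hspan a
      exact ⟨X, by rw [hKdef, Set.mem_setOf_eq, ← hXa]; exact ha, hXa.symm⟩
  have conePlus := image_cone hK (rowMul R U) (rowMul_add_col U) (rowMul_mul_col U)
  rw [hplus] at conePlus
  -- the relation module is f.g.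
  set d1 : (Fin (n + n) → R) → (Fin n → R) :=
    fun W i => W (Fin.castAdd n i) - W (Fin.natAdd n i) with hd1
  set d2 : (Fin (n + n) → R) → (Fin n → R) :=
    fun W i => W (Fin.natAdd n i) - W (Fin.castAdd n i) with hd2
  have hadd1 : ∀ x y, d1 (x + y) = d1 x + d1 y := by
    intro x y; funext i
    show (x + y) _ - (x + y) _ = (x _ - x _) + (y _ - y _)
    simp [Pi.add_apply]; abel
  have hsm1 : ∀ (x : Fin (n+n) → R) (r : R), d1 (fun l => x l * r) = fun i => d1 x i * r := by
    intro x r; funext i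
    show x _ * r - x _ * r = (x _ - x _) * r
    rw [sub_mul]
  have hadd2 : ∀ x y, d2 (x + y) = d2 x + d2 y := by
    intro x y; funext i
    show (x + y) _ - (x + y) _ = (x _ - x _) + (y _ - y _)
    simp [Pi.add_apply]; abel
  have hsm2 : ∀ (x : Fin (n+n) → R) (r : R), d2 (fun l => x l * r) = fun i => d2 x i * r := by
    intro x r; funext i
    show x _ * r - x _ * r = (x _ - x _) * r
    rw [sub_mul]
  have hS1 := refineK hR (base_cone hR (n + n)) hK d1 hadd1 hsm1
  have hS2 := refineK hR hS1 hK d2 hadd2 hsm2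
  have himg := image_cone hS2 d1 hadd1 hsm1
  have hset : d1 '' {W ∈ {W ∈ {W : Fin (n+n) → R | ∀ i, 0 ≤ W i} | d1 W ∈ K} | d2 W ∈ K}
      = {X : Fin n → R | rowMul R U X = 0} := by
    ext X
    constructor
    · rintro ⟨W, ⟨⟨hpos, h1K⟩, h2K⟩, rfl⟩
      have hneg : d2 W = -(d1 W) := by
        funext i
        show W _ - W _ = -(W _ - W _)
        abel
      rw [hKdef, Set.mem_setOf_eq] at h1K h2K
      rw [hneg, rowMul_neg_col] at h2K
      exact po_eq_zero R h1K h2K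
    · intro hX
      rw [Set.mem_setOf_eq] at hX
      choose P Q hP hQ hPQ using fun i => PORing.directed' (X i)
      have hd1W : d1 (Fin.append P Q) = X := by
        funext i
        show Fin.append P Q _ - Fin.append P Q _ = X i
        rw [Fin.append_left, Fin.append_right, ← hPQ i]
      have hd2W : d2 (Fin.append P Q) = -X := by
        funext i
        show Fin.append P Q _ - Fin.append P Q _ = -X i
        rw [Fin.append_left, Fin.append_right, hPQ i]
        abel
      refine ⟨Fin.append P Q, ⟨⟨append_nonneg hP hQ, ?_⟩, ?_⟩, hd1W⟩
      · rw [hd1W, hKdef, Set.mem_setOf_eq, hX]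
      · rw [hd2W, hKdef, Set.mem_setOf_eq, rowMul_neg_col, hX, neg_zero]
  rw [hset] at himg
  obtain ⟨q, f, hf⟩ := himg
  have hUf : ∀ j, rowMul R U (f j) = 0 := by
    intro j
    have := gen_mem_cone hf j
    rwa [Set.mem_setOf_eq] at this
  have hmod : {X : Fin n → R | rowMul R U X = 0} = {X | ∃ Y : Fin q → R, X = rowMul R f Y} := by
    ext X
    constructor
    · intro hX
      rw [hf] at hX
      obtain ⟨Y, _, hXeq⟩ := hX
      exact ⟨Y, hXeq⟩
    · rintro ⟨Y, rfl⟩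
      rw [Set.mem_setOf_eq, rowMul_rowMul]
      have hz : (fun j => rowMul R U (f j)) = fun _ => (0 : A) := funext hUf
      rw [hz, rowMul_zero_row]
  exact ⟨⟨n, U, hspan, q, f, hmod⟩, conePlus⟩

end Step1
section Step2

variable {R : Type*} [PORing R] {A : Type*} [AddCommGroup A] [PartialOrder A]
  [PORightModule R A]

/-- (iii) ⇒ (ii) -/
lemma step_iii_ii (hR : RightPoCoherent R)
    (hfp : FinitelyPresentedModule R A) (hcone : IsFGConeIn R {a : A | 0 ≤ a}) :
    FinitelyRelatedMod R A := by
  classical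
  obtain ⟨n, U, hspan, k, g, hrel⟩ := hfp
  obtain ⟨p, c, hc⟩ := hcone
  refine ⟨⟨n, U, hspan⟩, ?_⟩
  intro m V _
  unfold FinitelyRelatedAt
  choose B hB using fun i => hspan (V i)
  choose C hC using fun j => hspan (c j)
  have hUg : ∀ j, rowMul R U (g j) = 0 := by
    intro j
    have hmem : g j ∈ {X : Fin n → R | ∃ Y : Fin k → R, X = rowMul R g Y} :=
      ⟨fun l => if l = j then 1 else 0, (rowMul_delta (R := R) g j).symm⟩
    rw [← hrel] at hmem
    exact hmem
  have hUgY : ∀ Y : Fin k → R, rowMul R U (rowMul R g Y) = 0 := by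
    intro Y
    rw [rowMul_rowMul]
    have hz : (fun j => rowMul R U (g j)) = fun _ => (0 : A) := funext hUg
    rw [hz, rowMul_zero_row]
  -- the relation module is a f.g. cone (doubling trick)
  have happsplit : ∀ Y' : Fin (k + k) → R,
      rowMul R (Fin.append g (fun j => -(g j))) Y'
        = rowMul R g ((fun j => Y' (Fin.castAdd k j)) - fun j => Y' (Fin.natAdd k j)) := by
    intro Y'
    rw [rowMul_append, rowMul_neg_row, rowMul_sub_col, sub_eq_add_neg]
  have hZcone : IsFGConeIn R {ξ : Fin n → R | rowMul R U ξ = 0} := by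
    refine ⟨k + k, Fin.append g (fun j => -(g j)), ?_⟩
    ext ξ
    constructor
    · intro hξ
      have hξ2 : ξ ∈ {X : Fin n → R | ∃ Y : Fin k → R, X = rowMul R g Y} := by
        rw [← hrel]; exact hξ
      obtain ⟨Y, rfl⟩ := hξ2
      choose P Q hP hQ hPQ using fun j => PORing.directed' (Y j)
      refine ⟨Fin.append P Q, append_nonneg hP hQ, ?_⟩
      rw [happsplit]
      congr 1
      funext j
      show Y j = Fin.append P Q _ - Fin.append P Q _
      rw [Fin.append_left, Fin.append_right, hPQ j]
    · rintro ⟨Y', _, rfl⟩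
      rw [Set.mem_setOf_eq, happsplit]
      exact hUgY _
  -- the main system
  set Xof : (Fin (m + p) → R) → (Fin m → R) := fun W i => W (Fin.castAdd p i) with hXof
  set Tof : (Fin (m + p) → R) → (Fin p → R) := fun W j => W (Fin.natAdd m j) with hTof
  set d : (Fin (m + p) → R) → (Fin n → R) :=
    fun W => rowMul R B (Xof W) - rowMul R C (Tof W) with hd
  have hdadd : ∀ x y, d (x + y) = d x + d y := by
    intro x y
    have e1 : Xof (x + y) = Xof x + Xof y := rfl
    have e2 : Tof (x + y) = Tof x + Tof y := rfl
    simp only [hd]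
    rw [e1, e2, rowMul_add_col, rowMul_add_col]
    abel
  have hdsm : ∀ (x : Fin (m + p) → R) (r : R),
      d (fun l => x l * r) = fun i => d x i * r := by
    intro x r
    have e1 : Xof (fun l => x l * r) = fun i => Xof x i * r := rfl
    have e2 : Tof (fun l => x l * r) = fun j => Tof x j * r := rfl
    simp only [hd]
    rw [e1, e2, rowMul_mul_col, rowMul_mul_col]
    funext i
    show rowMul R B (Xof x) i * r - rowMul R C (Tof x) i * r
      = (rowMul R B (Xof x) i - rowMul R C (Tof x) i) * r
    rw [sub_mul]
  have hS1 := refineK hR (base_cone hR (m + p)) hZcone d hdadd hdsm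
  have hφadd : ∀ x y : Fin (m + p) → R, Xof (x + y) = Xof x + Xof y := fun x y => rfl
  have hφsm : ∀ (x : Fin (m + p) → R) (r : R),
      Xof (fun l => x l * r) = rsmul (Xof x) r := fun x r => rfl
  have himg := image_cone hS1 Xof hφadd hφsm
  have hrowV : ∀ X : Fin m → R, rowMul R U (rowMul R B X) = rowMul R V X := by
    intro X
    rw [rowMul_rowMul]
    congr 1
    funext i
    exact (hB i).symm
  have hrowc : ∀ T : Fin p → R, rowMul R U (rowMul R C T) = rowMul R c T := by
    intro T
    rw [rowMul_rowMul]
    congr 1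
    funext j
    exact (hC j).symm
  have hcpos : ∀ j, 0 ≤ c j := by
    intro j
    have := gen_mem_cone hc j
    exact this
  have hset : Xof '' {W ∈ {W : Fin (m + p) → R | ∀ i, 0 ≤ W i} |
        d W ∈ {ξ : Fin n → R | rowMul R U ξ = 0}}
      = {X : Fin m → R | 0 ≤ rowMul R V X ∧ ∀ i, 0 ≤ X i} := by
    ext X
    constructor
    · rintro ⟨W, ⟨hpos, hdZ⟩, rfl⟩
      rw [Set.mem_setOf_eq] at hdZ
      simp only [hd] at hdZ
      rw [rowMul_sub_col] at hdZ
      have heq : rowMul R U (rowMul R B (Xof W)) = rowMul R U (rowMul R C (Tof W)) :=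
        sub_eq_zero.mp hdZ
      rw [hrowV, hrowc] at heq
      refine ⟨?_, fun i => hpos _⟩
      rw [heq]
      exact rowMul_nonneg hcpos (fun j => hpos _)
    · rintro ⟨hVX, hXpos⟩
      have hmem : rowMul R V X ∈ {a : A | 0 ≤ a} := hVX
      rw [hc] at hmem
      obtain ⟨T, hT, hVXeq⟩ := hmem
      have hXW : Xof (Fin.append X T) = X := funext fun i => Fin.append_left X T i
      have hTW : Tof (Fin.append X T) = T := funext fun j => Fin.append_right X T j
      refine ⟨Fin.append X T, ⟨append_nonneg hXpos hT, ?_⟩, hXW⟩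
      rw [Set.mem_setOf_eq]
      simp only [hd]
      rw [hXW, hTW, rowMul_sub_col, hrowV, hrowc, ← hVXeq, sub_self]
  rw [hset] at himg
  exact himg

end Step2
/-- Let `R` be a right po-coherent po-ring and `A` a partially ordered right
`R`-module.  The following are equivalent: (i) `A` is finitely po-presented; (ii) `A` is
finitely related; (iii) `A` is a finitely presented right `R`-module and
`A⁺ = {a : A | 0 ≤ a}` is a finitely generated right `R⁺`-semimodule. -/
theorem finitelyPoPresented_tfae
    (R A : Type*) [PORing R] [AddCommGroup A] [PartialOrder A] [PORightModule R A]
    (hR : RightPoCoherent R) :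
    (FinitelyPoPresented R A ↔ FinitelyRelatedMod R A) ∧
    (FinitelyPoPresented R A ↔
      (FinitelyPresentedModule R A ∧ IsFGConeIn R {a : A | 0 ≤ a})) := by
  constructor
  · constructor
    · intro hi
      obtain ⟨hfp, hcone⟩ := step_i_iii hR hi
      exact step_iii_ii hR hfp hcone
    · exact step_ii_i
  · constructor
    · exact step_i_iii hR
    · rintro ⟨hfp, hcone⟩
      exact step_ii_i (step_iii_ii hR hfp hcone)
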